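/- Let c : ℕ → ℕ satisfy c 2 = 1, c 3 = 2, and c n = ⌊n/2⌋·⌈n/2⌉ + c ⌈n/2⌉ for n > 3, and let Δ n = c (n+1) - c n. If n = 2^k · m with m odd and m > 3, then Δ n = n - (m-1)/2. -/

import Mathlib

theorem aux6 (c : ℕ → ℕ)
    (hrec : ∀ n, 3 < n → c n = (n / 2) * ((n + 1) / 2) + c ((n + 1) / 2)) :
    ∀ k m n : ℕ, Odd m → 3 < m → n = 2 ^ k * m →
      c (n + 1) = c n + (n - (m - 1) / 2) := by
  intro k
  induction k with
  | zero =>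
    intro m n hm h3 hn
    simp at hn
    subst hn
    obtain ⟨t, ht⟩ := hm
    subst ht
    have h1 := hrec (2 * t + 1) (by omega)
    have h2 := hrec (2 * t + 2) (by omega)
    have e1 : (2 * t + 1) / 2 = t := by omega
    have e2 : (2 * t + 1 + 1) / 2 = t + 1 := by omega
    have e3 : (2 * t + 2) / 2 = t + 1 := by omega
    have e4 : (2 * t + 2 + 1) / 2 = t + 1 := by omega
    rw [e1, e2] at h1
    rw [e3, e4] at h2
    have e5 : 2 * t + 1 - (2 * t + 1 - 1) / 2 = t + 1 := by omega
    rw [h1, h2, e5]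
    ring
  | succ k ih =>
    intro m n hm h3 hn
    set s := 2 ^ k * m with hsdef
    have hs : n = 2 * s := by rw [hn, hsdef, pow_succ]; ring
    have hms : m ≤ s := Nat.le_mul_of_pos_left m (pow_pos (by norm_num) k)
    have h1 := hrec (2 * s) (by omega)
    have h2 := hrec (2 * s + 1) (by omega)
    have ihs := ih m s hm h3 rfl
    have e1 : (2 * s) / 2 = s := by omega
    have e2 : (2 * s + 1) / 2 = s := by omega
    have e3 : (2 * s + 1 + 1) / 2 = s + 1 := by omega
    rw [e1, e2] at h1
    rw [e2, e3] at h2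
    subst hs
    rw [h1, h2, ihs]
    have : s * (s + 1) = s * s + s := by ring
    omega

theorem stmt6 (c : ℕ → ℕ) (hc2 : c 2 = 1) (hc3 : c 3 = 2)
    (hrec : ∀ n, 3 < n → c n = (n / 2) * ((n + 1) / 2) + c ((n + 1) / 2)) :
    ∀ k m n : ℕ, Odd m → 3 < m → n = 2 ^ k * m →
      c (n + 1) - c n = n - (m - 1) / 2 := by
  intro k m n hm h3 hn
  have := aux6 c hrec k m n hm h3 hn
  omega
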